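/- Let (G,τ) = (G₁,τ₁) × (G₂,τ₂) be a product of topological abelian groups and φ = φ₁ × φ₂ where φᵢ: (Gᵢ,τᵢ) → (Gᵢ,τᵢ) are continuous endomorphisms. Then ent*_τ(φ) = ent*_{τ₁}(φ₁) + ent*_{τ₂}(φ₂). -/

import Mathlib

open Filter Topology ENNReal

variable {G : Type*} [AddCommGroup G]

/-- `B_n(φ,N) = N ∩ φ⁻¹(N) ∩ … ∩ φ^{-(n-1)}(N)`. -/
noncomputable def Bsub (φ : AddMonoid.End G) (N : AddSubgroup G) (n : ℕ) : AddSubgroup G :=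
  ⨅ i ∈ Finset.range n, N.comap (φ ^ i : AddMonoid.End G)

/-- `H*(φ,N) = lim_n log|G/B_n(φ,N)|/n`. -/
noncomputable def Hstar (φ : AddMonoid.End G) (N : AddSubgroup G) : ℝ :=
  limUnder atTop fun n : ℕ => Real.log ((Bsub φ N n).index) / n

/-- The topological adjoint entropy: sup of `H*(φ,N)` over `τ`-open finite-index subgroups. -/
noncomputable def entStar (t : TopologicalSpace G) (φ : AddMonoid.End G) : ℝ≥0∞ :=
  ⨆ (N : AddSubgroup G) (_ : @IsOpen G t ↑N ∧ N.FiniteIndex), ENNReal.ofReal (Hstar φ N)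

lemma mem_Bsub {φ : AddMonoid.End G} {N : AddSubgroup G} {n : ℕ} {x : G} :
    x ∈ Bsub φ N n ↔ ∀ i < n, (φ ^ i) x ∈ N := by
  simp only [Bsub, AddSubgroup.mem_iInf, AddSubgroup.mem_comap, Finset.mem_range]
  exact Iff.rfl

lemma comap_finiteIndex {G' : Type*} [AddCommGroup G'] (f : G' →+ G) {N : AddSubgroup G}
    (hN : N.FiniteIndex) : (N.comap f).FiniteIndex := by
  constructor
  rw [AddSubgroup.index_comap]
  exact ne_zero_of_dvd_ne_zero hN.index_ne_zero (AddSubgroup.relIndex_dvd_index_of_normal _ _)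

lemma Bsub_finiteIndex (φ : AddMonoid.End G) {N : AddSubgroup G} (hN : N.FiniteIndex) (n : ℕ) :
    (Bsub φ N n).FiniteIndex :=
  AddSubgroup.finiteIndex_iInf' _ fun _ _ => comap_finiteIndex _ hN

lemma Bsub_add (φ : AddMonoid.End G) (N : AddSubgroup G) (m n : ℕ) :
    Bsub φ N (m + n) = Bsub φ N m ⊓ (Bsub φ N n).comap (φ ^ m) := by
  ext x
  have key : ∀ (i m : ℕ) (x : G), (φ ^ (i + m)) x = (φ ^ i) ((φ ^ m) x) := by
    intro i m x
    rw [pow_add]; rfl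
  simp only [AddSubgroup.mem_inf, mem_Bsub]
  change (∀ i < m + n, _) ↔ (∀ i < m, _) ∧ (φ ^ m) x ∈ Bsub φ N n
  rw [mem_Bsub]
  constructor
  · intro h
    refine ⟨fun i hi => h i (by omega), fun i hi => ?_⟩
    have := h (i + m) (by omega)
    rwa [key] at this
  · rintro ⟨h1, h2⟩ i hi
    rcases lt_or_ge i m with h | h
    · exact h1 i h
    · have := h2 (i - m) (by omega)
      rwa [← key, Nat.sub_add_cancel h] at this

lemma index_Bsub_pos (φ : AddMonoid.End G) {N : AddSubgroup G} (hN : N.FiniteIndex) (n : ℕ) :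
    0 < (Bsub φ N n).index :=
  Nat.pos_of_ne_zero (Bsub_finiteIndex φ hN n).index_ne_zero

lemma index_Bsub_add_le (φ : AddMonoid.End G) {N : AddSubgroup G} (hN : N.FiniteIndex) (m n : ℕ) :
    (Bsub φ N (m + n)).index ≤ (Bsub φ N m).index * (Bsub φ N n).index := by
  rw [Bsub_add]
  calc (Bsub φ N m ⊓ (Bsub φ N n).comap (φ ^ m)).index
      ≤ (Bsub φ N m).index * ((Bsub φ N n).comap (φ ^ m)).index :=
        AddSubgroup.index_inf_le
    _ ≤ (Bsub φ N m).index * (Bsub φ N n).index := by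
        refine Nat.mul_le_mul_left _ (Nat.le_of_dvd (index_Bsub_pos φ hN n) ?_)
        erw [AddSubgroup.index_comap]
        exact AddSubgroup.relIndex_dvd_index_of_normal _ _

lemma log_index_subadditive (φ : AddMonoid.End G) {N : AddSubgroup G} (hN : N.FiniteIndex) :
    Subadditive fun n : ℕ => Real.log ((Bsub φ N n).index) := by
  intro m n
  rw [← Real.log_mul (by exact_mod_cast (index_Bsub_pos φ hN m).ne')
      (by exact_mod_cast (index_Bsub_pos φ hN n).ne'), ← Nat.cast_mul]
  apply Real.log_le_log (by exact_mod_cast index_Bsub_pos φ hN (m + n))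
  exact_mod_cast index_Bsub_add_le φ hN m n

lemma hstar_tendsto (φ : AddMonoid.End G) {N : AddSubgroup G} (hN : N.FiniteIndex) :
    Tendsto (fun n : ℕ => Real.log ((Bsub φ N n).index) / n) atTop (𝓝 (Hstar φ N)) := by
  have hs := log_index_subadditive φ hN
  have hb : BddBelow (Set.range fun n : ℕ => Real.log ((Bsub φ N n).index) / n) := by
    refine ⟨0, ?_⟩
    rintro x ⟨n, rfl⟩
    exact div_nonneg (Real.log_nonneg (by exact_mod_cast index_Bsub_pos φ hN n)) n.cast_nonneg
  have ht := hs.tendsto_lim hb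
  have : Hstar φ N = hs.lim := ht.limUnder_eq
  rw [this]; exact ht

lemma hstar_nonneg (φ : AddMonoid.End G) {N : AddSubgroup G} (hN : N.FiniteIndex) :
    0 ≤ Hstar φ N := by
  refine le_of_tendsto_of_tendsto' tendsto_const_nhds (hstar_tendsto φ hN) fun n => ?_
  exact div_nonneg (Real.log_nonneg (by exact_mod_cast index_Bsub_pos φ hN n)) n.cast_nonneg

lemma hstar_mono (φ : AddMonoid.End G) {K N : AddSubgroup G} (hK : K.FiniteIndex) (h : K ≤ N) :
    Hstar φ N ≤ Hstar φ K := by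
  have hN : N.FiniteIndex := AddSubgroup.finiteIndex_of_le h
  refine le_of_tendsto_of_tendsto' (hstar_tendsto φ hN) (hstar_tendsto φ hK) fun n => ?_
  refine div_le_div_of_nonneg_right ?_ n.cast_nonneg
  apply Real.log_le_log (by exact_mod_cast index_Bsub_pos φ hN n)
  have hle : Bsub φ K n ≤ Bsub φ N n := by
    intro x hx
    rw [mem_Bsub] at hx ⊢
    exact fun i hi => h (hx i hi)
  exact_mod_cast Nat.le_of_dvd (index_Bsub_pos φ hK n) (AddSubgroup.index_dvd_of_le hle)

section Prod
variable {G₁ G₂ : Type*} [AddCommGroup G₁] [AddCommGroup G₂]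

/-- The product endomorphism as an `AddMonoid.End`. -/
def prodEnd (φ₁ : AddMonoid.End G₁) (φ₂ : AddMonoid.End G₂) :
    AddMonoid.End (G₁ × G₂) :=
  (φ₁ : G₁ →+ G₁).prodMap (φ₂ : G₂ →+ G₂)

lemma prodEnd_pow_apply (φ₁ : AddMonoid.End G₁) (φ₂ : AddMonoid.End G₂) (n : ℕ) (x : G₁ × G₂) :
    ((prodEnd φ₁ φ₂) ^ n) x = ((φ₁ ^ n) x.1, (φ₂ ^ n) x.2) := by
  induction n generalizing x with
  | zero => rfl
  | succ n ih =>
    calc ((prodEnd φ₁ φ₂) ^ (n + 1)) x = ((prodEnd φ₁ φ₂) ^ n) ((prodEnd φ₁ φ₂) x) := by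
          rw [pow_succ]; rfl
      _ = ((φ₁ ^ n) ((prodEnd φ₁ φ₂) x).1, (φ₂ ^ n) ((prodEnd φ₁ φ₂) x).2) := ih _
      _ = ((φ₁ ^ (n + 1)) x.1, (φ₂ ^ (n + 1)) x.2) := by
          rw [pow_succ, pow_succ]; rfl

lemma Bsub_prod (φ₁ : AddMonoid.End G₁) (φ₂ : AddMonoid.End G₂)
    (N₁ : AddSubgroup G₁) (N₂ : AddSubgroup G₂) (n : ℕ) :
    Bsub (prodEnd φ₁ φ₂) (N₁.prod N₂) n = (Bsub φ₁ N₁ n).prod (Bsub φ₂ N₂ n) := by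
  ext x
  simp only [mem_Bsub, AddSubgroup.mem_prod, prodEnd_pow_apply]
  constructor
  · intro h
    exact ⟨fun i hi => (h i hi).1, fun i hi => (h i hi).2⟩
  · rintro ⟨h1, h2⟩ i hi
    exact ⟨h1 i hi, h2 i hi⟩

lemma Hstar_prod (φ₁ : AddMonoid.End G₁) (φ₂ : AddMonoid.End G₂)
    {N₁ : AddSubgroup G₁} {N₂ : AddSubgroup G₂}
    (h₁ : N₁.FiniteIndex) (h₂ : N₂.FiniteIndex) :
    Hstar (prodEnd φ₁ φ₂) (N₁.prod N₂) = Hstar φ₁ N₁ + Hstar φ₂ N₂ := by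
  have hprod : (N₁.prod N₂).FiniteIndex := by
    constructor
    rw [AddSubgroup.index_prod]
    exact Nat.mul_ne_zero h₁.index_ne_zero h₂.index_ne_zero
  have ht : Tendsto (fun n : ℕ => Real.log ((Bsub (prodEnd φ₁ φ₂) (N₁.prod N₂) n).index) / n)
      atTop (𝓝 (Hstar φ₁ N₁ + Hstar φ₂ N₂)) := by
    have heq : (fun n : ℕ => Real.log ((Bsub (prodEnd φ₁ φ₂) (N₁.prod N₂) n).index) / n)
        = fun n : ℕ => Real.log ((Bsub φ₁ N₁ n).index) / n + Real.log ((Bsub φ₂ N₂ n).index) / n := by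
      funext n
      rw [Bsub_prod, AddSubgroup.index_prod, Nat.cast_mul,
        Real.log_mul (by exact_mod_cast (index_Bsub_pos φ₁ h₁ n).ne')
          (by exact_mod_cast (index_Bsub_pos φ₂ h₂ n).ne'), add_div]
    rw [heq]
    exact (hstar_tendsto φ₁ h₁).add (hstar_tendsto φ₂ h₂)
  exact tendsto_nhds_unique (hstar_tendsto (prodEnd φ₁ φ₂) hprod) ht

end Prod

theorem stmt10 {G₁ G₂ : Type*} [AddCommGroup G₁] [AddCommGroup G₂]
    [TopologicalSpace G₁] [IsTopologicalAddGroup G₁]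
    [TopologicalSpace G₂] [IsTopologicalAddGroup G₂]
    (φ₁ : AddMonoid.End G₁) (hφ₁ : Continuous φ₁)
    (φ₂ : AddMonoid.End G₂) (hφ₂ : Continuous φ₂) :
    entStar (inferInstance : TopologicalSpace (G₁ × G₂))
        ((φ₁ : G₁ →+ G₁).prodMap (φ₂ : G₂ →+ G₂))
      = entStar ‹TopologicalSpace G₁› φ₁ + entStar ‹TopologicalSpace G₂› φ₂ := by
  have hent : entStar (inferInstance : TopologicalSpace (G₁ × G₂))
      ((φ₁ : G₁ →+ G₁).prodMap (φ₂ : G₂ →+ G₂))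
      = entStar (inferInstance : TopologicalSpace (G₁ × G₂)) (prodEnd φ₁ φ₂) := rfl
  rw [hent]
  apply le_antisymm
  · -- entropy of product ≤ sum
    refine iSup_le fun N => iSup_le fun hN => ?_
    obtain ⟨hNopen, hNfin⟩ := hN
    set N₁ : AddSubgroup G₁ := N.comap (AddMonoidHom.inl G₁ G₂) with hN₁
    set N₂ : AddSubgroup G₂ := N.comap (AddMonoidHom.inr G₁ G₂) with hN₂
    have h₁fin : N₁.FiniteIndex := comap_finiteIndex _ hNfin
    have h₂fin : N₂.FiniteIndex := comap_finiteIndex _ hNfin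
    have h₁open : IsOpen (N₁ : Set G₁) := by
      have : (N₁ : Set G₁) = (fun x : G₁ => ((x, 0) : G₁ × G₂)) ⁻¹' (N : Set (G₁ × G₂)) := rfl
      rw [this]
      exact hNopen.preimage (continuous_id.prodMk continuous_const)
    have h₂open : IsOpen (N₂ : Set G₂) := by
      have : (N₂ : Set G₂) = (fun x : G₂ => ((0, x) : G₁ × G₂)) ⁻¹' (N : Set (G₁ × G₂)) := rfl
      rw [this]
      exact hNopen.preimage (continuous_const.prodMk continuous_id)
    have hle : N₁.prod N₂ ≤ N := by
      rintro ⟨x, y⟩ ⟨hx, hy⟩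
      have : ((x, y) : G₁ × G₂) = (x, 0) + (0, y) := by simp
      rw [this]
      exact add_mem hx hy
    have hprodfin : (N₁.prod N₂).FiniteIndex := by
      constructor
      rw [AddSubgroup.index_prod]
      exact Nat.mul_ne_zero h₁fin.index_ne_zero h₂fin.index_ne_zero
    refine le_trans (ENNReal.ofReal_le_ofReal (hstar_mono _ hprodfin hle)) ?_
    rw [Hstar_prod φ₁ φ₂ h₁fin h₂fin,
      ENNReal.ofReal_add (hstar_nonneg φ₁ h₁fin) (hstar_nonneg φ₂ h₂fin)]
    exact add_le_add
      (le_iSup_of_le N₁ (le_iSup_of_le ⟨h₁open, h₁fin⟩ le_rfl))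
      (le_iSup_of_le N₂ (le_iSup_of_le ⟨h₂open, h₂fin⟩ le_rfl))
  · -- sum ≤ entropy of product
    have h1 : entStar ‹TopologicalSpace G₁› φ₁
        = ⨆ N : {N : AddSubgroup G₁ // IsOpen (N : Set G₁) ∧ N.FiniteIndex},
            ENNReal.ofReal (Hstar φ₁ N) := by
      rw [entStar, iSup_subtype']
    have h2 : entStar ‹TopologicalSpace G₂› φ₂
        = ⨆ N : {N : AddSubgroup G₂ // IsOpen (N : Set G₂) ∧ N.FiniteIndex},
            ENNReal.ofReal (Hstar φ₂ N) := by
      rw [entStar, iSup_subtype']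
    rw [h1, h2]
    have i1 : Nonempty {N : AddSubgroup G₁ // IsOpen (N : Set G₁) ∧ N.FiniteIndex} :=
      ⟨⟨⊤, by simpa using isOpen_univ, inferInstance⟩⟩
    have i2 : Nonempty {N : AddSubgroup G₂ // IsOpen (N : Set G₂) ∧ N.FiniteIndex} :=
      ⟨⟨⊤, by simpa using isOpen_univ, inferInstance⟩⟩
    refine ENNReal.iSup_add_iSup_le fun N₁ N₂ => ?_
    obtain ⟨N₁, h₁open, h₁fin⟩ := N₁
    obtain ⟨N₂, h₂open, h₂fin⟩ := N₂
    have hopen : IsOpen ((N₁.prod N₂ : AddSubgroup (G₁ × G₂)) : Set (G₁ × G₂)) := by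
      rw [AddSubgroup.coe_prod]
      exact h₁open.prod h₂open
    have hfin : (N₁.prod N₂).FiniteIndex := by
      constructor
      rw [AddSubgroup.index_prod]
      exact Nat.mul_ne_zero h₁fin.index_ne_zero h₂fin.index_ne_zero
    calc ENNReal.ofReal (Hstar φ₁ N₁) + ENNReal.ofReal (Hstar φ₂ N₂)
        = ENNReal.ofReal (Hstar φ₁ N₁ + Hstar φ₂ N₂) :=
          (ENNReal.ofReal_add (hstar_nonneg φ₁ h₁fin) (hstar_nonneg φ₂ h₂fin)).symm
      _ = ENNReal.ofReal (Hstar (prodEnd φ₁ φ₂) (N₁.prod N₂)) := by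
          rw [Hstar_prod φ₁ φ₂ h₁fin h₂fin]
      _ ≤ entStar (inferInstance : TopologicalSpace (G₁ × G₂)) (prodEnd φ₁ φ₂) :=
          le_iSup_of_le (N₁.prod N₂) (le_iSup_of_le ⟨hopen, hfin⟩ le_rfl)
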